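/- For n ≥ 1, the graph Γ_CCC(Sym(n)) is a cograph if and only if n ≤ 4. -/

import Mathlib

/-- The set of conjugacy classes of non-central elements of `G`. -/
def NCClass (G : Type*) [Group G] : Type _ :=
  {c : ConjClasses G // ∃ x : G, ConjClasses.mk x = c ∧ x ∉ Subgroup.center G}

/-- The conjugacy class graph associated to a property `P` of subgroups:
two distinct non-central conjugacy classes are adjacent iff they have
representatives `a`, `b` with `P ⟨a, b⟩`. -/
def classGraph (G : Type*) [Group G] (P : Subgroup G → Prop) :
    SimpleGraph (NCClass G) where
  Adj c d := c ≠ d ∧ ∃ a b : G, ConjClasses.mk a = c.1 ∧ ConjClasses.mk b = d.1 ∧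
    P (Subgroup.closure {a, b})
  symm := by
    constructor
    rintro c d ⟨hne, a, b, ha, hb, hP⟩
    refine ⟨hne.symm, b, a, hb, ha, ?_⟩
    rwa [Set.pair_comm]
  loopless := ⟨by rintro c ⟨hne, -⟩; exact hne rfl⟩

/-- The commuting conjugacy class graph `Γ_CCC(G)`. -/
def cccGraph (G : Type*) [Group G] : SimpleGraph (NCClass G) :=
  classGraph G (fun H => ∀ x ∈ H, ∀ y ∈ H, x * y = y * x)

/-- The nilpotent conjugacy class graph `Γ_NCC(G)`. -/
def nccGraph (G : Type*) [Group G] : SimpleGraph (NCClass G) :=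
  classGraph G (fun H => Group.IsNilpotent H)

/-- The solvable conjugacy class graph `Γ_SCC(G)`. -/
def sccGraph (G : Type*) [Group G] : SimpleGraph (NCClass G) :=
  classGraph G (fun H => IsSolvable H)

/-- A graph contains an induced path `P₄` on four vertices. -/
def HasInducedP4 {V : Type*} (Γ : SimpleGraph V) : Prop :=
  ∃ a b c d : V, a ≠ b ∧ a ≠ c ∧ a ≠ d ∧ b ≠ c ∧ b ≠ d ∧ c ≠ d ∧
    Γ.Adj a b ∧ Γ.Adj b c ∧ Γ.Adj c d ∧ ¬Γ.Adj a c ∧ ¬Γ.Adj a d ∧ ¬Γ.Adj b d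

/-- A graph is a cograph iff it has no induced `P₄`. -/
def IsCograph {V : Type*} (Γ : SimpleGraph V) : Prop := ¬ HasInducedP4 Γ

/-- A graph contains an induced cycle `Cₙ`. -/
def HasInducedCycle {V : Type*} (Γ : SimpleGraph V) (n : ℕ) : Prop :=
  ∃ f : ZMod n → V, Function.Injective f ∧
    ∀ i j : ZMod n, Γ.Adj (f i) (f j) ↔ (j = i + 1 ∨ i = j + 1)

/-- A graph is chordal iff it has no induced cycle `Cₙ` for `n ≥ 4`. -/
def IsChordal {V : Type*} (Γ : SimpleGraph V) : Prop :=
  ∀ n : ℕ, 4 ≤ n → ¬ HasInducedCycle Γ n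

/-- A graph contains an induced `2K₂`. -/
def Has2K2 {V : Type*} (Γ : SimpleGraph V) : Prop :=
  ∃ a b c d : V, a ≠ b ∧ a ≠ c ∧ a ≠ d ∧ b ≠ c ∧ b ≠ d ∧ c ≠ d ∧
    Γ.Adj a b ∧ Γ.Adj c d ∧ ¬Γ.Adj a c ∧ ¬Γ.Adj a d ∧ ¬Γ.Adj b c ∧ ¬Γ.Adj b d

/-- A graph contains an induced claw `K_{1,3}`: a vertex with three pairwise
non-adjacent neighbours. -/
def HasClaw {V : Type*} (Γ : SimpleGraph V) : Prop :=
  ∃ v a b c : V, a ≠ b ∧ a ≠ c ∧ b ≠ c ∧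
    Γ.Adj v a ∧ Γ.Adj v b ∧ Γ.Adj v c ∧ ¬Γ.Adj a b ∧ ¬Γ.Adj a c ∧ ¬Γ.Adj b c

/-- A graph is claw-free iff it has no induced `K_{1,3}`. -/
def IsClawFree {V : Type*} (Γ : SimpleGraph V) : Prop := ¬ HasClaw Γ

/-- A graph is split iff it has no induced `C₄`, `C₅` or `2K₂`. -/
def IsSplit {V : Type*} (Γ : SimpleGraph V) : Prop :=
  ¬ HasInducedCycle Γ 4 ∧ ¬ HasInducedCycle Γ 5 ∧ ¬ Has2K2 Γ

/-- A graph is threshold iff it has no induced `P₄`, `C₄`, `C₅` or `2K₂`. -/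
def IsThreshold {V : Type*} (Γ : SimpleGraph V) : Prop :=
  ¬ HasInducedP4 Γ ∧ ¬ HasInducedCycle Γ 4 ∧ ¬ HasInducedCycle Γ 5 ∧ ¬ Has2K2 Γ

/-- An EPPO group: every non-identity element has prime power order. -/
def IsEPPO (G : Type*) [Group G] : Prop :=
  ∀ g : G, g ≠ 1 → IsPrimePow (orderOf g)
section Gen
variable {G : Type*} [Group G]

lemma ccc_adj_iff {c d : NCClass G} :
    (cccGraph G).Adj c d ↔ c ≠ d ∧ ∃ a b : G, ConjClasses.mk a = c.1 ∧
      ConjClasses.mk b = d.1 ∧ a * b = b * a := by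
  constructor
  · rintro ⟨hne, a, b, ha, hb, hP⟩
    exact ⟨hne, a, b, ha, hb, hP a (Subgroup.subset_closure (by simp)) b
      (Subgroup.subset_closure (by simp))⟩
  · rintro ⟨hne, a, b, ha, hb, hcomm⟩
    refine ⟨hne, a, b, ha, hb, ?_⟩
    intro x hx y hy
    induction hx, hy using Subgroup.closure_induction₂ with
    | mem x y hx hy =>
      simp only [Set.mem_insert_iff, Set.mem_singleton_iff] at hx hy
      rcases hx with rfl | rfl <;> rcases hy with rfl | rfl
      · rfl
      · exact hcomm
      · exact hcomm.symm
      · rfl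
    | one_left x hx => simp
    | one_right x hx => simp
    | mul_left x y z hx hy hz h1 h2 => rw [mul_assoc, h2, ← mul_assoc, h1, mul_assoc]
    | mul_right a b c ha hb hc h1 h2 =>
      exact ((Commute.mul_right (h1 : Commute c a) (h2 : Commute c b)) : _)
    | inv_left x y hx hy h => exact (Commute.inv_left h : _)
    | inv_right x y hx hy h => exact (Commute.inv_right h : _)

/-- From adjacency extract a commuting pair in normalized form. -/
lemma ccc_adj_destruct {x y : G} {c d : NCClass G} (hc : ConjClasses.mk x = c.1)
    (hd : ConjClasses.mk y = d.1) (h : (cccGraph G).Adj c d) :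
    ∃ g : G, x * (g * y * g⁻¹) = (g * y * g⁻¹) * x := by
  obtain ⟨-, a, b, ha, hb, hab⟩ := ccc_adj_iff.mp h
  have hax : IsConj a x := ConjClasses.mk_eq_mk_iff_isConj.mp (ha.trans hc.symm)
  have hby : IsConj b y := ConjClasses.mk_eq_mk_iff_isConj.mp (hb.trans hd.symm)
  obtain ⟨g1, hg1⟩ := isConj_iff.mp hax
  obtain ⟨g2, hg2⟩ := isConj_iff.mp hby
  have key : ∀ u v w : G, (w * u * w⁻¹) * (w * v * w⁻¹) = w * (u * v) * w⁻¹ := by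
    intros; group
  refine ⟨g1 * g2⁻¹, ?_⟩
  have hb' : g1 * g2⁻¹ * y * (g1 * g2⁻¹)⁻¹ = g1 * b * g1⁻¹ := by
    rw [← hg2]; group
  rw [hb', ← hg1, key, key, hab]

/-- Build a vertex from a non-central element. -/
def mkV (x : G) (hx : x ∉ Subgroup.center G) : NCClass G :=
  ⟨ConjClasses.mk x, x, rfl, hx⟩

lemma mkV_ne {x y : G} {hx : x ∉ Subgroup.center G} {hy : y ∉ Subgroup.center G}
    (h : ¬ IsConj x y) : mkV x hx ≠ mkV y hy := by
  intro he
  exact h (ConjClasses.mk_eq_mk_iff_isConj.mp (congrArg Subtype.val he))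

lemma val_eq_of_eq {u v : NCClass G} (h : u.1 = v.1) : u = v := Subtype.ext h

instance permIsConjDec (n : ℕ) : DecidableRel (IsConj (α := Equiv.Perm (Fin n))) :=
  fun _ _ => decidable_of_iff _ isConj_iff.symm

end Gen
section Rot
open Equiv Equiv.Perm

private def ivEquiv (n a k : ℕ) (h : a + k ≤ n) :
    Fin k ≃ {x : Fin n // a ≤ x.val ∧ x.val < a + k} where
  toFun i := ⟨⟨a + i.val, by have := i.isLt; omega⟩, ⟨by simp only [Fin.val_mk]; omega, by have := i.isLt; simp only [Fin.val_mk]; omega⟩⟩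
  invFun x := ⟨x.1.val - a, by have := x.2; omega⟩
  left_inv i := by apply Fin.ext; simp
  right_inv x := by apply Subtype.ext; apply Fin.ext; have := x.2; simp; omega

private def rotI (n a k : ℕ) (h : a + k ≤ n) : Equiv.Perm (Fin n) :=
  (finRotate k).extendDomain (ivEquiv n a k h)

private lemma rotI_apply_notmem {n a k : ℕ} (h : a + k ≤ n) {x : Fin n}
    (hx : ¬ (a ≤ x.val ∧ x.val < a + k)) : rotI n a k h x = x :=
  Equiv.Perm.extendDomain_apply_not_subtype _ _ hx

private lemma rotI_apply_mem {n a k : ℕ} (h : a + k ≤ n) (h2 : 2 ≤ k) {x : Fin n}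
    (hx1 : a ≤ x.val) (hx2 : x.val < a + k) :
    (rotI n a k h x).val = a + ((x.val - a + 1) % k) := by
  obtain ⟨m, rfl⟩ : ∃ m, k = m + 1 := ⟨k - 1, by omega⟩
  rw [rotI, Equiv.Perm.extendDomain_apply_subtype _ _ ⟨hx1, hx2⟩]
  simp only [ivEquiv, Equiv.coe_fn_mk, Equiv.coe_fn_symm_mk, finRotate_succ_apply, Fin.add_def]
  simp only [Fin.val_one']
  rw [Nat.mod_eq_of_lt (by omega : (1 : ℕ) < m + 1)]

/-- `(v + r) % m ≠ v` when `0 < r < m` and `v < m`. -/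
private lemma add_mod_ne {m v r : ℕ} (h1 : 0 < r) (h2 : r < m) (hv : v < m) :
    (v + r) % m ≠ v := by
  intro he
  have hmod : (v + r) % m = (v + 0) % m := by simpa [Nat.mod_eq_of_lt hv] using he
  have : m ∣ (v + r) - (v + 0) := (Nat.modEq_iff_dvd' (by omega)).mp hmod.symm
  have : m ∣ r := by simpa using this
  exact absurd (Nat.le_of_dvd h1 this) (by omega)

/-- shifts by distinct small amounts stay distinct mod `m` -/
private lemma mod_shift_ne {m v i j : ℕ} (hij : i < j) (hj : j - i < m) :
    (v + i) % m ≠ (v + j) % m := by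
  intro he
  have : m ∣ (v + j) - (v + i) := (Nat.modEq_iff_dvd' (by omega)).mp he
  have : m ∣ j - i := by
    have hrw : (v + j) - (v + i) = j - i := by omega
    rwa [hrw] at this
  exact absurd (Nat.le_of_dvd (by omega) this) (by omega)

end Rot
section Helpers
open Equiv Equiv.Perm

theorem Equiv.Perm.inv_apply_self {α : Type*} (f : Equiv.Perm α) (x : α) : f⁻¹ (f x) = x :=
  f.symm_apply_apply x

theorem Equiv.Perm.apply_inv_self {α : Type*} (f : Equiv.Perm α) (x : α) : f (f⁻¹ x) = x :=
  f.apply_symm_apply x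

private lemma notcen_witness {n : ℕ} {x : Equiv.Perm (Fin n)} {i w : Fin n}
    (h1 : x i ≠ i) (h2 : w ≠ i) (h3 : w ≠ x i) :
    x ∉ Subgroup.center (Equiv.Perm (Fin n)) := by
  intro hc
  have h := Subgroup.mem_center_iff.mp hc (Equiv.swap (x i) w)
  have h' : (Equiv.swap (x i) w * x) i = (x * Equiv.swap (x i) w) i := by rw [h]
  rw [Equiv.Perm.mul_apply, Equiv.Perm.mul_apply, Equiv.swap_apply_left,
    Equiv.swap_apply_of_ne_of_ne (Ne.symm h1) (fun hh => h2 (hh.symm))] at h'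
  exact h3 h'

private lemma swap_comm_cases {α : Type*} [DecidableEq α] {u v : α} (huv : u ≠ v)
    {f : Equiv.Perm α} (h : Equiv.swap u v * f = f * Equiv.swap u v) :
    (f u = u ∧ f v = v) ∨ (f u = v ∧ f v = u) := by
  have hu : Equiv.swap u v (f u) = f v := by
    have := congrArg (fun σ : Equiv.Perm α => σ u) h.symm
    exact (by simpa [Equiv.Perm.mul_apply, Equiv.swap_apply_left] using this : f v = _).symm
  by_cases h1 : f u = u
  · left
    refine ⟨h1, ?_⟩
    rw [h1, Equiv.swap_apply_left] at hu
    exact hu.symm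
  · by_cases h2 : f u = v
    · right
      refine ⟨h2, ?_⟩
      rw [h2, Equiv.swap_apply_right] at hu
      exact hu.symm
    · exfalso
      rw [Equiv.swap_apply_of_ne_of_ne h1 h2] at hu
      exact huv (f.injective hu)

private lemma conj_pow_helper {G : Type*} [Group G] (g x : G) (k : ℕ) :
    (g * x * g⁻¹) ^ k = g * x ^ k * g⁻¹ := by
  rw [← MulAut.conj_apply, ← map_pow, MulAut.conj_apply]

private lemma isconj_pow_eq_one {G : Type*} [Group G] {x y : G} (h : IsConj x y)
    {k : ℕ} (hy : y ^ k = 1) : x ^ k = 1 := by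
  obtain ⟨g, hg⟩ := isConj_iff.mp h
  have h1 : (g * x * g⁻¹) ^ k = 1 := by rw [hg, hy]
  rw [conj_pow_helper] at h1
  have : x ^ k = g⁻¹ * (g * x ^ k * g⁻¹) * g := by group
  rw [this, h1]
  group

private lemma isconj_fix_fixless {n : ℕ} {x y : Equiv.Perm (Fin n)} (h : IsConj x y)
    {i : Fin n} (hi : x i = i) (hy : ∀ z, y z ≠ z) : False := by
  obtain ⟨g, hg⟩ := isConj_iff.mp h
  apply hy (g i)
  rw [← hg]
  simp only [Equiv.Perm.mul_apply]
  rw [Equiv.Perm.inv_apply_self, hi]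

private lemma conj_apply_ne {n : ℕ} {y : Equiv.Perm (Fin n)} (g : Equiv.Perm (Fin n))
    (hy : ∀ z, y z ≠ z) (z : Fin n) : (g * y * g⁻¹) z ≠ z := by
  intro h
  simp only [Equiv.Perm.mul_apply] at h
  exact hy (g⁻¹ z) (g.injective (by rw [h, Equiv.Perm.apply_inv_self]))

private lemma conj_sq_apply_ne {n : ℕ} {y : Equiv.Perm (Fin n)} (g : Equiv.Perm (Fin n))
    (hy : ∀ z, y (y z) ≠ z) (z : Fin n) : (g * y * g⁻¹) ((g * y * g⁻¹) z) ≠ z := by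
  intro h
  simp only [Equiv.Perm.mul_apply, Equiv.Perm.inv_apply_self] at h
  exact hy (g⁻¹ z) (g.injective (by rw [h, Equiv.Perm.apply_inv_self]))

end Helpers
section Big
open Equiv Equiv.Perm

variable {n : ℕ}

private def pa (n : ℕ) (hn : 6 ≤ n) : Equiv.Perm (Fin n) := rotI n 0 (n-2) (by omega)
private def pc (n : ℕ) (hn : 6 ≤ n) : Equiv.Perm (Fin n) := rotI n 0 3 (by omega)
private def pe (n : ℕ) (hn : 6 ≤ n) : Equiv.Perm (Fin n) := rotI n 3 (n-3) (by omega)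
private def pd (n : ℕ) (hn : 6 ≤ n) : Equiv.Perm (Fin n) := pc n hn * pe n hn
private def pb (n : ℕ) (hn : 6 ≤ n) : Equiv.Perm (Fin n) :=
  Equiv.swap ⟨n-2, by omega⟩ ⟨n-1, by omega⟩

variable (hn : 6 ≤ n)

private lemma pa_lt {x : Fin n} (hx : x.val < n-2) :
    (pa n hn x).val = (x.val + 1) % (n-2) := by
  have := rotI_apply_mem (n := n) (a := 0) (k := n-2) (by omega) (by omega)
    (Nat.zero_le _) (by omega : x.val < 0 + (n-2))
  simpa [pa] using this

private lemma pa_ge {x : Fin n} (hx : n-2 ≤ x.val) : pa n hn x = x :=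
  rotI_apply_notmem _ (by omega)

private lemma pc_lt {x : Fin n} (hx : x.val < 3) :
    (pc n hn x).val = (x.val + 1) % 3 := by
  have := rotI_apply_mem (n := n) (a := 0) (k := 3) (by omega) (by omega)
    (Nat.zero_le _) (by omega : x.val < 0 + 3)
  simpa [pc] using this

private lemma pc_ge {x : Fin n} (hx : 3 ≤ x.val) : pc n hn x = x :=
  rotI_apply_notmem _ (by omega)

private lemma pe_lt {x : Fin n} (hx : x.val < 3) : pe n hn x = x :=
  rotI_apply_notmem _ (by omega)

private lemma pe_ge {x : Fin n} (hx : 3 ≤ x.val) :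
    (pe n hn x).val = 3 + ((x.val - 3 + 1) % (n-3)) := by
  have := rotI_apply_mem (n := n) (a := 3) (k := n-3) (by omega) (by omega)
    hx (by have := x.isLt; omega : x.val < 3 + (n-3))
  simpa [pe] using this

private lemma pa_fix_iff {x : Fin n} : pa n hn x = x ↔ n-2 ≤ x.val := by
  constructor
  · intro h
    by_contra hlt
    have hv := pa_lt hn (by omega : x.val < n-2)
    rw [h] at hv
    exact add_mod_ne (by omega) (by omega) (by omega) hv.symm
  · exact pa_ge hn

private lemma pd_fixless (x : Fin n) : pd n hn x ≠ x := by
  by_cases hx : x.val < 3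
  · have he : pe n hn x = x := pe_lt hn hx
    intro h
    rw [pd, Equiv.Perm.mul_apply, he] at h
    have hv := pc_lt hn hx
    rw [h] at hv
    exact add_mod_ne (by omega) (by omega) (by omega) hv.symm
  · push_neg at hx
    have hv := pe_ge hn hx
    have h3 : 3 ≤ (pe n hn x).val := by omega
    intro h
    rw [pd, Equiv.Perm.mul_apply, pc_ge hn h3] at h
    rw [h] at hv
    exact add_mod_ne (r := 1) (by omega) (by omega) (by omega) (by omega : (x.val - 3 + 1) % (n-3) = x.val - 3)

private lemma pd2_fixless (x : Fin n) : pd n hn (pd n hn x) ≠ x := by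
  by_cases hx : x.val < 3
  · have he : pe n hn x = x := pe_lt hn hx
    have h1 : pd n hn x = pc n hn x := by rw [pd, Equiv.Perm.mul_apply, he]
    have hv1 : (pc n hn x).val = (x.val + 1) % 3 := pc_lt hn hx
    have hlt : (pc n hn x).val < 3 := by omega
    have h2 : pd n hn (pc n hn x) = pc n hn (pc n hn x) := by
      rw [pd, Equiv.Perm.mul_apply, pe_lt hn hlt]
    intro h
    rw [h1, h2] at h
    have hv2 := pc_lt hn hlt
    rw [h] at hv2
    rw [hv1, Nat.mod_add_mod] at hv2
    exact add_mod_ne (r := 2) (by omega) (by omega) (by omega) hv2.symm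
  · push_neg at hx
    have hv1 := pe_ge hn hx
    have h3 : 3 ≤ (pe n hn x).val := by omega
    have h1 : pd n hn x = pe n hn x := by rw [pd, Equiv.Perm.mul_apply, pc_ge hn h3]
    have h2 : pd n hn (pe n hn x) = pe n hn (pe n hn x) := by
      have h3' : 3 ≤ (pe n hn (pe n hn x)).val := by
        have := pe_ge hn h3; omega
      rw [pd, Equiv.Perm.mul_apply, pc_ge hn h3']
    intro h
    rw [h1, h2] at h
    have hv2 := pe_ge hn h3
    rw [h] at hv2
    rw [hv1] at hv2
    have : (3 + ((x.val - 3 + 1) % (n-3)) - 3 + 1) = ((x.val - 3 + 1) % (n-3)) + 1 := by omega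
    rw [this, Nat.mod_add_mod,
      show x.val - 3 + 1 + 1 = x.val - 3 + 2 from by omega] at hv2
    exact add_mod_ne (r := 2) (m := n-3) (v := x.val - 3) (by omega) (by omega) (by omega)
      (by omega)

private lemma pc_cube : pc n hn ^ 3 = 1 := by
  apply Equiv.ext
  intro x
  simp only [pow_succ, pow_zero, one_mul, Equiv.Perm.mul_apply, Equiv.Perm.one_apply]
  by_cases hx : x.val < 3
  · have h1 := pc_lt hn hx
    have l1 : (pc n hn x).val < 3 := by omega
    have h2 := pc_lt hn l1
    have l2 : (pc n hn (pc n hn x)).val < 3 := by omega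
    have h3 := pc_lt hn l2
    apply Fin.ext
    rw [h3, h2, h1]
    omega
  · have e1 : pc n hn x = x := pc_ge hn (by omega)
    rw [e1, e1, e1]

private lemma disj_ab : (pa n hn).Disjoint (pb n hn) := by
  intro x
  by_cases hx : n-2 ≤ x.val
  · exact Or.inl (pa_ge hn hx)
  · exact Or.inr (Equiv.swap_apply_of_ne_of_ne
      (Fin.ne_of_val_ne (show x.val ≠ n-2 by omega))
      (Fin.ne_of_val_ne (show x.val ≠ n-1 by omega)))

private lemma disj_cb : (pc n hn).Disjoint (pb n hn) := by
  intro x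
  by_cases hx : 3 ≤ x.val
  · exact Or.inl (pc_ge hn hx)
  · exact Or.inr (Equiv.swap_apply_of_ne_of_ne
      (Fin.ne_of_val_ne (show x.val ≠ n-2 by omega))
      (Fin.ne_of_val_ne (show x.val ≠ n-1 by omega)))

private lemma disj_ce : (pc n hn).Disjoint (pe n hn) := by
  intro x
  by_cases hx : 3 ≤ x.val
  · exact Or.inl (pc_ge hn hx)
  · exact Or.inr (pe_lt hn (by omega))

private lemma edge_ab : pa n hn * pb n hn = pb n hn * pa n hn := (disj_ab hn).commute
private lemma edge_bc : pb n hn * pc n hn = pc n hn * pb n hn := ((disj_cb hn).commute.symm : _)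
private lemma edge_cd : pc n hn * pd n hn = pd n hn * pc n hn := by
  have h := (disj_ce hn).commute
  rw [pd, mul_assoc, ← h]

end Big
section Big2
open Equiv Equiv.Perm
variable {n : ℕ}

private def z0 (hn : 6 ≤ n) : Fin n := ⟨0, by omega⟩
private def z1 (hn : 6 ≤ n) : Fin n := ⟨1, by omega⟩
private def z2 (hn : 6 ≤ n) : Fin n := ⟨2, by omega⟩
private def z3 (hn : 6 ≤ n) : Fin n := ⟨3, by omega⟩
private def zp (hn : 6 ≤ n) : Fin n := ⟨n-2, by omega⟩
private def zq (hn : 6 ≤ n) : Fin n := ⟨n-1, by omega⟩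

variable (hn : 6 ≤ n)

private lemma pa_z0 : pa n hn (z0 hn) = z1 hn := by
  apply Fin.ext
  rw [pa_lt hn (by simp [z0]; omega)]
  show (0 + 1) % (n-2) = 1
  rw [Nat.mod_eq_of_lt (by omega)]

private lemma pa_z1 : pa n hn (z1 hn) = z2 hn := by
  apply Fin.ext
  rw [pa_lt hn (by simp [z1]; omega)]
  show (1 + 1) % (n-2) = 2
  rw [Nat.mod_eq_of_lt (by omega)]

private lemma pa_z2 : pa n hn (z2 hn) = z3 hn := by
  apply Fin.ext
  rw [pa_lt hn (by simp [z2]; omega)]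
  show (2 + 1) % (n-2) = 3
  rw [Nat.mod_eq_of_lt (by omega)]

private lemma pc_z0 : pc n hn (z0 hn) = z1 hn := by
  apply Fin.ext
  rw [pc_lt hn (by simp [z0])]
  rfl

private lemma pc_z1 : pc n hn (z1 hn) = z2 hn := by
  apply Fin.ext
  rw [pc_lt hn (by simp [z1])]
  rfl

private lemma pd_z0 : pd n hn (z0 hn) = z1 hn := by
  rw [pd, Equiv.Perm.mul_apply, pe_lt hn (by simp [z0]), pc_z0]

private lemma ne01 : z1 hn ≠ z0 hn := Fin.ne_of_val_ne (by simp [z0, z1])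
private lemma ne21 : z2 hn ≠ z1 hn := Fin.ne_of_val_ne (by simp [z2, z1])
private lemma ne20 : z2 hn ≠ z0 hn := Fin.ne_of_val_ne (by simp [z2, z0])

private lemma pa_notcen : pa n hn ∉ Subgroup.center (Equiv.Perm (Fin n)) := by
  apply notcen_witness (i := z0 hn) (w := z2 hn)
  · rw [pa_z0]; exact ne01 hn
  · exact ne20 hn
  · rw [pa_z0]; exact ne21 hn

private lemma pc_notcen : pc n hn ∉ Subgroup.center (Equiv.Perm (Fin n)) := by
  apply notcen_witness (i := z0 hn) (w := z2 hn)
  · rw [pc_z0]; exact ne01 hn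
  · exact ne20 hn
  · rw [pc_z0]; exact ne21 hn

private lemma pd_notcen : pd n hn ∉ Subgroup.center (Equiv.Perm (Fin n)) := by
  apply notcen_witness (i := z0 hn) (w := z2 hn)
  · rw [pd_z0]; exact ne01 hn
  · exact ne20 hn
  · rw [pd_z0]; exact ne21 hn

private lemma pb_zp : pb n hn (zp hn) = zq hn := by
  rw [pb]
  exact Equiv.swap_apply_left _ _

private lemma pb_z0 : pb n hn (z0 hn) = z0 hn := by
  rw [pb]
  exact Equiv.swap_apply_of_ne_of_ne (Fin.ne_of_val_ne (by simp [z0]; omega))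
    (Fin.ne_of_val_ne (by simp [z0]; omega))

private lemma pb_notcen : pb n hn ∉ Subgroup.center (Equiv.Perm (Fin n)) := by
  apply notcen_witness (i := zp hn) (w := z0 hn)
  · rw [pb_zp]; exact Fin.ne_of_val_ne (by simp [zp, zq]; omega)
  · exact Fin.ne_of_val_ne (by simp [z0, zp]; omega)
  · rw [pb_zp]; exact Fin.ne_of_val_ne (by simp [z0, zq]; omega)

private lemma pb_sq : pb n hn ^ 2 = 1 := by
  rw [pb, pow_two, Equiv.swap_mul_self]

private lemma pa_sq_ne : pa n hn ^ 2 ≠ 1 := by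
  intro h
  have h' := congrArg (fun σ : Equiv.Perm (Fin n) => σ (z0 hn)) h
  simp only [pow_two, Equiv.Perm.mul_apply, Equiv.Perm.one_apply] at h'
  rw [pa_z0, pa_z1] at h'
  exact ne20 hn h'

private lemma pa_cube_ne : pa n hn ^ 3 ≠ 1 := by
  intro h
  have h' := congrArg (fun σ : Equiv.Perm (Fin n) => σ (z0 hn)) h
  simp only [pow_succ, pow_zero, one_mul, Equiv.Perm.mul_apply, Equiv.Perm.one_apply] at h'
  rw [pa_z0, pa_z1, pa_z2] at h'
  exact Fin.ne_of_val_ne (by simp [z3, z0]) h'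

private lemma pc_sq_ne : pc n hn ^ 2 ≠ 1 := by
  intro h
  have h' := congrArg (fun σ : Equiv.Perm (Fin n) => σ (z0 hn)) h
  simp only [pow_two, Equiv.Perm.mul_apply, Equiv.Perm.one_apply] at h'
  rw [pc_z0, pc_z1] at h'
  exact ne20 hn h'

private lemma pa_zp : pa n hn (zp hn) = zp hn := pa_ge hn (by simp [zp])
private lemma pa_zq : pa n hn (zq hn) = zq hn := pa_ge hn (by simp [zq]; omega)
private lemma pc_z3 : pc n hn (z3 hn) = z3 hn := pc_ge hn (by simp [z3])

private lemma nc_ab : ¬ IsConj (pa n hn) (pb n hn) :=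
  fun h => pa_sq_ne hn (isconj_pow_eq_one h (pb_sq hn))

private lemma nc_ac : ¬ IsConj (pa n hn) (pc n hn) :=
  fun h => pa_cube_ne hn (isconj_pow_eq_one h (pc_cube hn))

private lemma nc_ad : ¬ IsConj (pa n hn) (pd n hn) :=
  fun h => isconj_fix_fixless h (pa_zp hn) (pd_fixless hn)

private lemma nc_bc : ¬ IsConj (pb n hn) (pc n hn) :=
  fun h => pc_sq_ne hn (isconj_pow_eq_one h.symm (pb_sq hn))

private lemma nc_bd : ¬ IsConj (pb n hn) (pd n hn) :=
  fun h => isconj_fix_fixless h (pb_z0 hn) (pd_fixless hn)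

private lemma nc_cd : ¬ IsConj (pc n hn) (pd n hn) :=
  fun h => isconj_fix_fixless h (pc_z3 hn) (pd_fixless hn)

end Big2
section Big3
open Equiv Equiv.Perm
variable {n : ℕ} (hn : 6 ≤ n)

private lemma pb_eq : pb n hn = Equiv.swap (zp hn) (zq hn) := rfl

private lemma zp_ne_zq : zp hn ≠ zq hn := Fin.ne_of_val_ne (by simp [zp, zq]; omega)

private lemma fact_bd (g : Equiv.Perm (Fin n)) :
    pb n hn * (g * pd n hn * g⁻¹) ≠ (g * pd n hn * g⁻¹) * pb n hn := by
  intro h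
  rw [pb_eq] at h
  rcases swap_comm_cases (zp_ne_zq hn) h with ⟨h1, -⟩ | ⟨h1, h2⟩
  · exact conj_apply_ne g (pd_fixless hn) (zp hn) h1
  · apply conj_sq_apply_ne g (pd2_fixless hn) (zp hn)
    rw [h1, h2]

private lemma fix_cases {f : Equiv.Perm (Fin n)}
    (hpt : ∀ z, pa n hn (f z) = f (pa n hn z)) :
    (f (zp hn) = zp hn ∨ f (zp hn) = zq hn) ∧ (f (zq hn) = zp hn ∨ f (zq hn) = zq hn) := by
  constructor
  · have h1 : pa n hn (f (zp hn)) = f (zp hn) := by rw [hpt, pa_zp]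
    have hv : n - 2 ≤ (f (zp hn)).val := (pa_fix_iff hn).mp h1
    have hlt := (f (zp hn)).isLt
    rcases (by omega : (f (zp hn)).val = n-2 ∨ (f (zp hn)).val = n-1) with he | he
    · exact Or.inl (Fin.ext he)
    · exact Or.inr (Fin.ext he)
  · have h1 : pa n hn (f (zq hn)) = f (zq hn) := by rw [hpt, pa_zq]
    have hv : n - 2 ≤ (f (zq hn)).val := (pa_fix_iff hn).mp h1
    have hlt := (f (zq hn)).isLt
    rcases (by omega : (f (zq hn)).val = n-2 ∨ (f (zq hn)).val = n-1) with he | he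
    · exact Or.inl (Fin.ext he)
    · exact Or.inr (Fin.ext he)

private lemma fact_ad (g : Equiv.Perm (Fin n)) :
    pa n hn * (g * pd n hn * g⁻¹) ≠ (g * pd n hn * g⁻¹) * pa n hn := by
  intro h
  set f := g * pd n hn * g⁻¹ with hf
  have hpt : ∀ z, pa n hn (f z) = f (pa n hn z) := by
    intro z
    rw [← Equiv.Perm.mul_apply, ← Equiv.Perm.mul_apply, h]
  obtain ⟨hp, hq⟩ := fix_cases hn hpt
  rcases hp with hp | hp
  · exact conj_apply_ne g (pd_fixless hn) (zp hn) hp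
  · rcases hq with hq | hq
    · apply conj_sq_apply_ne g (pd2_fixless hn) (zp hn)
      rw [hp, hq]
    · exact conj_apply_ne g (pd_fixless hn) (zq hn) hq

private lemma fact_ac (g : Equiv.Perm (Fin n)) :
    pa n hn * (g * pc n hn * g⁻¹) ≠ (g * pc n hn * g⁻¹) * pa n hn := by
  intro h
  set f := g * pc n hn * g⁻¹ with hf
  have hpt : ∀ z, pa n hn (f z) = f (pa n hn z) := by
    intro z
    rw [← Equiv.Perm.mul_apply, ← Equiv.Perm.mul_apply, h]
  have happ : ∀ z, f z = g (pc n hn (g⁻¹ z)) := by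
    intro z; simp [hf, Equiv.Perm.mul_apply]
  have hcube : ∀ z, f (f (f z)) = z := by
    intro z
    have h3 : f ^ 3 = 1 := by
      rw [hf, conj_pow_helper, pc_cube hn]
      group
    have := congrArg (fun σ : Equiv.Perm (Fin n) => σ z) h3
    simpa [pow_succ, Equiv.Perm.mul_apply] using this
  obtain ⟨hp, hq⟩ := fix_cases hn hpt
  -- establish f fixes both zp and zq
  have hfp : f (zp hn) = zp hn := by
    rcases hp with hp | hp
    · exact hp
    · exfalso
      rcases hq with hq | hq
      · have := hcube (zp hn)
        rw [hp, hq, hp] at this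
        exact zp_ne_zq hn this.symm
      · exact zp_ne_zq hn (f.injective (hp.trans hq.symm))
  have hfq : f (zq hn) = zq hn := by
    rcases hq with hq | hq
    · exact absurd (f.injective (hq.trans hfp.symm)) (zp_ne_zq hn).symm
    · exact hq
  -- the moved point x₀ = g 0
  set x0 : Fin n := g (z0 hn) with hx0def
  have hx0 : f x0 = g (z1 hn) := by
    rw [happ, hx0def, Equiv.Perm.inv_apply_self, pc_z0]
  have m0 : f x0 ≠ x0 := by
    rw [hx0, hx0def]
    exact fun e => ne01 hn (g.injective e)
  have hx0p : x0 ≠ zp hn := fun e => m0 (by rw [e, hfp])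
  have hx0q : x0 ≠ zq hn := fun e => m0 (by rw [e, hfq])
  have hv0 : x0.val < n - 2 := by
    have h1 : x0.val ≠ n-2 := fun e => hx0p (Fin.ext (by simp [zp, e]))
    have h2 : x0.val ≠ n-1 := fun e => hx0q (Fin.ext (by simp [zq, e]))
    have := x0.isLt
    omega
  -- iterating pa stays in the moved set of f
  have Hmove : ∀ z, f z ≠ z → f (pa n hn z) ≠ pa n hn z := by
    intro z hz e
    apply hz
    apply (pa n hn).injective
    rw [← hpt z] at e
    exact e
  have Hmem : ∀ z, f z ≠ z → (g⁻¹ z).val < 3 := by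
    intro z hz
    by_contra hge
    apply hz
    rw [happ, pc_ge hn (by omega), Equiv.Perm.apply_inv_self]
  set x1 := pa n hn x0 with hx1def
  set x2 := pa n hn x1 with hx2def
  set x3 := pa n hn x2 with hx3def
  have e1 : x1.val = (x0.val + 1) % (n-2) := pa_lt hn hv0
  have l1 : x1.val < n - 2 := by rw [e1]; exact Nat.mod_lt _ (by omega)
  have e2 : x2.val = (x0.val + 2) % (n-2) := by
    rw [hx2def, pa_lt hn l1, e1, Nat.mod_add_mod,
      show x0.val + 1 + 1 = x0.val + 2 from by omega]
  have l2 : x2.val < n - 2 := by rw [e2]; exact Nat.mod_lt _ (by omega)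
  have e3 : x3.val = (x0.val + 3) % (n-2) := by
    rw [hx3def, pa_lt hn l2, e2, Nat.mod_add_mod,
      show x0.val + 2 + 1 = x0.val + 3 from by omega]
  have e0 : x0.val = (x0.val + 0) % (n-2) := by
    rw [Nat.add_zero, Nat.mod_eq_of_lt hv0]
  have m1 : f x1 ≠ x1 := Hmove _ m0
  have m2 : f x2 ≠ x2 := Hmove _ m1
  have m3 : f x3 ≠ x3 := Hmove _ m2
  have w0 := Hmem _ m0
  have w1 := Hmem _ m1
  have w2 := Hmem _ m2
  have w3 := Hmem _ m3
  -- distinctness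
  have dist : ∀ {u v : Fin n} {i j : ℕ}, u.val = (x0.val + i) % (n-2) →
      v.val = (x0.val + j) % (n-2) → i < j → j - i < n - 2 →
      (g⁻¹ u).val ≠ (g⁻¹ v).val := by
    intro u v i j hu hv hij hji e
    have huv : u = v := g⁻¹.injective (Fin.ext e)
    rw [huv] at hu
    exact mod_shift_ne hij hji (hu.symm.trans hv)
  have d01 := dist e0 e1 (by omega) (by omega)
  have d02 := dist e0 e2 (by omega) (by omega)
  have d03 := dist e0 e3 (by omega) (by omega)
  have d12 := dist e1 e2 (by omega) (by omega)
  have d13 := dist e1 e3 (by omega) (by omega)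
  have d23 := dist e2 e3 (by omega) (by omega)
  omega

end Big3
section Small
open Equiv Equiv.Perm

private def r1 : Equiv.Perm (Fin 4) := c[0, 1]
private def r2 : Equiv.Perm (Fin 4) := c[0, 1] * c[2, 3]
private def r3 : Equiv.Perm (Fin 4) := c[0, 1, 2]
private def r4 : Equiv.Perm (Fin 4) := c[0, 1, 2, 3]

set_option maxRecDepth 20000 in
private lemma classify4 (v : NCClass (Equiv.Perm (Fin 4))) :
    v.1 = ConjClasses.mk r1 ∨ v.1 = ConjClasses.mk r2 ∨ v.1 = ConjClasses.mk r3 ∨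
      v.1 = ConjClasses.mk r4 := by
  obtain ⟨x, hx, hxc⟩ := v.2
  have hx1 : x ≠ 1 := by rintro rfl; exact hxc (Subgroup.one_mem _)
  have key : ∀ y : Equiv.Perm (Fin 4), y ≠ 1 →
      IsConj y r1 ∨ IsConj y r2 ∨ IsConj y r3 ∨ IsConj y r4 := by decide
  rcases key x hx1 with h | h | h | h
  · exact Or.inl (by rw [← hx, ConjClasses.mk_eq_mk_iff_isConj]; exact h)
  · exact Or.inr (Or.inl (by rw [← hx, ConjClasses.mk_eq_mk_iff_isConj]; exact h))
  · exact Or.inr (Or.inr (Or.inl (by rw [← hx, ConjClasses.mk_eq_mk_iff_isConj]; exact h)))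
  · exact Or.inr (Or.inr (Or.inr (by rw [← hx, ConjClasses.mk_eq_mk_iff_isConj]; exact h)))

set_option maxRecDepth 20000 in
private lemma nc13 : ∀ g : Equiv.Perm (Fin 4),
    r1 * (g * r3 * g⁻¹) ≠ (g * r3 * g⁻¹) * r1 := by decide
set_option maxRecDepth 20000 in
private lemma nc31 : ∀ g : Equiv.Perm (Fin 4),
    r3 * (g * r1 * g⁻¹) ≠ (g * r1 * g⁻¹) * r3 := by decide
set_option maxRecDepth 20000 in
private lemma nc14 : ∀ g : Equiv.Perm (Fin 4),
    r1 * (g * r4 * g⁻¹) ≠ (g * r4 * g⁻¹) * r1 := by decide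
set_option maxRecDepth 20000 in
private lemma nc41 : ∀ g : Equiv.Perm (Fin 4),
    r4 * (g * r1 * g⁻¹) ≠ (g * r1 * g⁻¹) * r4 := by decide
set_option maxRecDepth 20000 in
private lemma nc34 : ∀ g : Equiv.Perm (Fin 4),
    r3 * (g * r4 * g⁻¹) ≠ (g * r4 * g⁻¹) * r3 := by decide
set_option maxRecDepth 20000 in
private lemma nc43 : ∀ g : Equiv.Perm (Fin 4),
    r4 * (g * r3 * g⁻¹) ≠ (g * r3 * g⁻¹) * r4 := by decide

private lemma case4 : IsCograph (cccGraph (Equiv.Perm (Fin 4))) := by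
  rintro ⟨a, b, c, d, hab, hac, had, hbc, hbd, hcd, eab, ebc, ecd, nac, nad, nbd⟩
  have mid : ∀ u v : NCClass (Equiv.Perm (Fin 4)), (cccGraph _).Adj u v →
      u.1 = ConjClasses.mk r2 ∨ v.1 = ConjClasses.mk r2 := by
    intro u v huv
    by_contra hcon
    push_neg at hcon
    obtain ⟨hu2, hv2⟩ := hcon
    have hne : u.1 ≠ v.1 := fun h => huv.ne (val_eq_of_eq h)
    rcases classify4 u with hu | hu | hu | hu <;> rcases classify4 v with hv | hv | hv | hv <;>
      first
      | exact hu2 hu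
      | exact hv2 hv
      | exact hne (hu.trans hv.symm)
      | (obtain ⟨g, hg⟩ := ccc_adj_destruct hu.symm hv.symm huv;
         first
         | exact nc13 g hg
         | exact nc31 g hg
         | exact nc14 g hg
         | exact nc41 g hg
         | exact nc34 g hg
         | exact nc43 g hg)
  rcases mid a b eab with h1 | h1 <;> rcases mid c d ecd with h2 | h2
  · exact hac (val_eq_of_eq (h1.trans h2.symm))
  · exact had (val_eq_of_eq (h1.trans h2.symm))
  · exact hbc (val_eq_of_eq (h1.trans h2.symm))
  · exact hbd (val_eq_of_eq (h1.trans h2.symm))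

private def s1 : Equiv.Perm (Fin 3) := c[0, 1]
private def s2 : Equiv.Perm (Fin 3) := c[0, 1, 2]

private lemma classify3 (v : NCClass (Equiv.Perm (Fin 3))) :
    v.1 = ConjClasses.mk s1 ∨ v.1 = ConjClasses.mk s2 := by
  obtain ⟨x, hx, hxc⟩ := v.2
  have hx1 : x ≠ 1 := by rintro rfl; exact hxc (Subgroup.one_mem _)
  have key : ∀ y : Equiv.Perm (Fin 3), y ≠ 1 → IsConj y s1 ∨ IsConj y s2 := by decide
  rcases key x hx1 with h | h
  · exact Or.inl (by rw [← hx, ConjClasses.mk_eq_mk_iff_isConj]; exact h)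
  · exact Or.inr (by rw [← hx, ConjClasses.mk_eq_mk_iff_isConj]; exact h)

private lemma case3 : IsCograph (cccGraph (Equiv.Perm (Fin 3))) := by
  rintro ⟨a, b, c, d, hab, hac, had, hbc, hbd, hcd, -⟩
  rcases classify3 a with ha | ha <;> rcases classify3 b with hb | hb <;>
    rcases classify3 c with hc | hc <;> rcases classify3 d with hd | hd <;>
    first
    | exact hab (val_eq_of_eq (ha.trans hb.symm))
    | exact hac (val_eq_of_eq (ha.trans hc.symm))
    | exact had (val_eq_of_eq (ha.trans hd.symm))
    | exact hbc (val_eq_of_eq (hb.trans hc.symm))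
    | exact hbd (val_eq_of_eq (hb.trans hd.symm))
    | exact hcd (val_eq_of_eq (hc.trans hd.symm))

private lemma caseSmall (n : ℕ) (h : ∀ x g : Equiv.Perm (Fin n), g * x = x * g) :
    IsCograph (cccGraph (Equiv.Perm (Fin n))) := by
  rintro ⟨a, -, -, -, -⟩
  obtain ⟨x, -, hxc⟩ := a.2
  exact hxc (Subgroup.mem_center_iff.mpr (h x))

private lemma case2 : IsCograph (cccGraph (Equiv.Perm (Fin 2))) :=
  caseSmall 2 (by decide)

private lemma case1 : IsCograph (cccGraph (Equiv.Perm (Fin 1))) :=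
  caseSmall 1 (by decide)

end Small
section Builder
variable {G : Type*} [Group G]

/-- Build an induced `P₄` in the commuting conjugacy class graph from four
explicit elements. -/
lemma hasP4_of_elements {a b c d : G}
    (hna : a ∉ Subgroup.center G) (hnb : b ∉ Subgroup.center G)
    (hnc : c ∉ Subgroup.center G) (hnd : d ∉ Subgroup.center G)
    (nab : ¬ IsConj a b) (nac : ¬ IsConj a c) (nad : ¬ IsConj a d)
    (nbc : ¬ IsConj b c) (nbd : ¬ IsConj b d) (ncd : ¬ IsConj c d)
    (eab : a * b = b * a) (ebc : b * c = c * b) (ecd : c * d = d * c)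
    (fac : ∀ g : G, a * (g * c * g⁻¹) ≠ (g * c * g⁻¹) * a)
    (fad : ∀ g : G, a * (g * d * g⁻¹) ≠ (g * d * g⁻¹) * a)
    (fbd : ∀ g : G, b * (g * d * g⁻¹) ≠ (g * d * g⁻¹) * b) :
    HasInducedP4 (cccGraph G) := by
  refine ⟨mkV a hna, mkV b hnb, mkV c hnc, mkV d hnd, mkV_ne nab, mkV_ne nac,
    mkV_ne nad, mkV_ne nbc, mkV_ne nbd, mkV_ne ncd, ?_, ?_, ?_, ?_, ?_, ?_⟩
  · exact ccc_adj_iff.mpr ⟨mkV_ne nab, a, b, rfl, rfl, eab⟩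
  · exact ccc_adj_iff.mpr ⟨mkV_ne nbc, b, c, rfl, rfl, ebc⟩
  · exact ccc_adj_iff.mpr ⟨mkV_ne ncd, c, d, rfl, rfl, ecd⟩
  · intro h; obtain ⟨g, hg⟩ := ccc_adj_destruct rfl rfl h; exact fac g hg
  · intro h; obtain ⟨g, hg⟩ := ccc_adj_destruct rfl rfl h; exact fad g hg
  · intro h; obtain ⟨g, hg⟩ := ccc_adj_destruct rfl rfl h; exact fbd g hg

end Builder

section Five
open Equiv Equiv.Perm

private def a5 : Equiv.Perm (Fin 5) := c[0, 1, 2, 3]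
private def b5 : Equiv.Perm (Fin 5) := c[0, 2] * c[1, 3]
private def c5 : Equiv.Perm (Fin 5) := c[0, 2]
private def d5 : Equiv.Perm (Fin 5) := c[0, 2] * c[1, 3, 4]

private lemma notcen5 {x : Equiv.Perm (Fin 5)} (h : ¬ ∀ g, g * x = x * g) :
    x ∉ Subgroup.center (Equiv.Perm (Fin 5)) :=
  fun hc => h (Subgroup.mem_center_iff.mp hc)

set_option maxRecDepth 40000 in
private lemma case5 : HasInducedP4 (cccGraph (Equiv.Perm (Fin 5))) := by
  refine hasP4_of_elements (a := a5) (b := b5) (c := c5) (d := d5)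
    (notcen5 (by decide)) (notcen5 (by decide)) (notcen5 (by decide)) (notcen5 (by decide))
    (by decide) (by decide) (by decide) (by decide) (by decide) (by decide)
    (by decide) (by decide) (by decide)
    (by decide) (by decide) (by decide)

end Five
private lemma case_big (n : ℕ) (hn : 6 ≤ n) :
    HasInducedP4 (cccGraph (Equiv.Perm (Fin n))) :=
  hasP4_of_elements (pa_notcen hn) (pb_notcen hn) (pc_notcen hn) (pd_notcen hn)
    (nc_ab hn) (nc_ac hn) (nc_ad hn) (nc_bc hn) (nc_bd hn) (nc_cd hn)
    (edge_ab hn) (edge_bc hn) (edge_cd hn)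
    (fact_ac hn) (fact_ad hn) (fact_bd hn)

theorem ccc_sym_cograph_iff (n : ℕ) (hn : 1 ≤ n) :
    IsCograph (cccGraph (Equiv.Perm (Fin n))) ↔ n ≤ 4 := by
  constructor
  · intro hcog
    by_contra h
    push_neg at h
    rcases Nat.lt_or_ge n 6 with h6 | h6
    · have h5 : n = 5 := by omega
      subst h5
      exact hcog case5
    · exact hcog (case_big n h6)
  · intro h4
    interval_cases n
    · exact case1
    · exact case2
    · exact case3
    · exact case4
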